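/- For every positive integer n, S^n_+ = cone(⋃_{P ∈ O^n} {PᵀXP : X ∈ B_+}) and S^n_+ = cone(⋃_{P ∈ O^n} {PᵀXP : X ∈ B_-}), where O^n is the set of n×n real orthogonal matrices. -/

import Mathlib

open Matrix Finset

noncomputable section

/-- `e i` is the standard basis vector with a `1` in coordinate `i`. -/
def e {n : ℕ} (i : Fin n) : Fin n → ℝ := Pi.single i 1

/-- The positive semidefinite cone `S^n_+`. -/
def PSDcone (n : ℕ) : Set (Matrix (Fin n) (Fin n) ℝ) :=
  {X | X.IsSymm ∧ ∀ d : Fin n → ℝ, 0 ≤ d ⬝ᵥ X.mulVec d}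

/-- The set of diagonally dominant symmetric matrices `DD_n`. -/
def DD (n : ℕ) : Set (Matrix (Fin n) (Fin n) ℝ) :=
  {A | A.IsSymm ∧ ∀ i, ∑ j ∈ Finset.univ.erase i, |A i j| ≤ A i i}

/-- The set of scaled diagonally dominant symmetric matrices `SDD_n`. -/
def SDD (n : ℕ) : Set (Matrix (Fin n) (Fin n) ℝ) :=
  {A | A.IsSymm ∧ ∃ D : Fin n → ℝ, (∀ i, 0 < D i) ∧
    Matrix.diagonal D * A * Matrix.diagonal D ∈ DD n}

/-- The conical hull of a set of matrices. -/
def coneHull {n : ℕ} (K : Set (Matrix (Fin n) (Fin n) ℝ)) :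
    Set (Matrix (Fin n) (Fin n) ℝ) :=
  {X | ∃ (k : ℕ) (c : Fin k → ℝ) (M : Fin k → Matrix (Fin n) (Fin n) ℝ),
    (∀ i, 0 ≤ c i) ∧ (∀ i, M i ∈ K) ∧ X = ∑ i, c i • M i}

/-- The dual cone within `S^n` w.r.t. the trace inner product. -/
def dualCone {n : ℕ} (K : Set (Matrix (Fin n) (Fin n) ℝ)) :
    Set (Matrix (Fin n) (Fin n) ℝ) :=
  {A | A.IsSymm ∧ ∀ B ∈ K, 0 ≤ Matrix.trace (Aᵀ * B)}

/-- The SD basis of Type I, as a set. -/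
def Bplus (n : ℕ) : Set (Matrix (Fin n) (Fin n) ℝ) :=
  {M | ∃ i j : Fin n, i ≤ j ∧ M = vecMulVec (e i + e j) (e i + e j)}

/-- The SD basis of Type II, as a set. -/
def Bminus (n : ℕ) : Set (Matrix (Fin n) (Fin n) ℝ) :=
  {M | ∃ i : Fin n, M = vecMulVec (e i + e i) (e i + e i)} ∪
    {M | ∃ i j : Fin n, i < j ∧ M = vecMulVec (e i - e j) (e i - e j)}

/-- The expanded SD basis matrix `B̄_{i,j}(α) = (e_i + α e_j)(e_i + α e_j)ᵀ`. -/
def Bbar {n : ℕ} (α : ℝ) (i j : Fin n) : Matrix (Fin n) (Fin n) ℝ :=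
  vecMulVec (e i + α • e j) (e i + α • e j)

/-- The expanded SD basis `B̄(α)`, as a set. -/
def BbarSet (n : ℕ) (α : ℝ) : Set (Matrix (Fin n) (Fin n) ℝ) :=
  {M | ∃ i j : Fin n, i ≤ j ∧ M = Bbar α i j}

/-- The space `S^n` of symmetric matrices as a submodule. -/
def symmSubmodule (n : ℕ) : Submodule ℝ (Matrix (Fin n) (Fin n) ℝ) where
  carrier := {A | A.IsSymm}
  add_mem' := fun {A B} hA hB => by
    simp only [Set.mem_setOf_eq, Matrix.IsSymm, Matrix.transpose_add] at *
    rw [hA, hB]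
  zero_mem' := by simp [Matrix.IsSymm]
  smul_mem' := fun c A hA => by
    simp only [Set.mem_setOf_eq, Matrix.IsSymm, Matrix.transpose_smul] at *
    rw [hA]

/-- Index set for pairs `1 ≤ i ≤ j ≤ n`. -/
abbrev SymIdx (n : ℕ) := {p : Fin n × Fin n // p.1 ≤ p.2}



-- Auxiliary lemmas

lemma herm_iff_symm {n : ℕ} (A : Matrix (Fin n) (Fin n) ℝ) : A.IsHermitian ↔ A.IsSymm := by
  unfold Matrix.IsHermitian Matrix.IsSymm
  rw [show Aᴴ = Aᵀ from Matrix.ext fun i j => star_trivial _]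

lemma mem_psd_iff {n : ℕ} {X : Matrix (Fin n) (Fin n) ℝ} :
    X ∈ PSDcone n ↔ X.PosSemidef := by
  unfold PSDcone
  rw [Matrix.posSemidef_iff_dotProduct_mulVec]
  rw [Set.mem_setOf_eq, herm_iff_symm]
  refine and_congr_right fun _ => forall_congr' fun d => ?_
  rw [show star d = d from funext fun i => star_trivial _]

lemma vv_psd {n : ℕ} (v : Fin n → ℝ) : (vecMulVec v v).PosSemidef := by
  refine Matrix.PosSemidef.of_dotProduct_mulVec_nonneg ?_ ?_
  · rw [herm_iff_symm]
    ext i j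
    simp [vecMulVec_apply, mul_comm]
  · intro x
    have h : (vecMulVec v v) *ᵥ x = (v ⬝ᵥ x) • v := by
      ext i
      simp only [Matrix.mulVec, dotProduct, vecMulVec_apply, Pi.smul_apply, smul_eq_mul,
        Finset.sum_mul]
      exact Finset.sum_congr rfl fun j _ => by ring
    rw [h]
    simp only [star_trivial, dotProduct_smul, smul_eq_mul]
    rw [dotProduct_comm]
    exact mul_self_nonneg _

lemma diag_eq_sum {n : ℕ} (d : Fin n → ℝ) :
    Matrix.diagonal d = ∑ i, d i • vecMulVec (e i) (e i) := by
  ext i j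
  simp only [Matrix.sum_apply, Matrix.smul_apply, vecMulVec_apply, smul_eq_mul,
    Matrix.diagonal_apply, e]
  rw [Finset.sum_eq_single i]
  · by_cases h : i = j <;> simp [h, Pi.single_apply]
  · intro b _ hb
    simp [Pi.single_apply, Ne.symm hb]
  · simp

lemma psd_smul {n : ℕ} {c : ℝ} {M : Matrix (Fin n) (Fin n) ℝ}
    (hc : 0 ≤ c) (hM : M.PosSemidef) : (c • M).PosSemidef := by
  refine Matrix.PosSemidef.of_dotProduct_mulVec_nonneg ?_ ?_
  · have hs := (herm_iff_symm M).mp hM.1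
    rw [herm_iff_symm]
    unfold Matrix.IsSymm at *
    rw [Matrix.transpose_smul, hs]
  · intro x
    rw [Matrix.smul_mulVec, dotProduct_smul, smul_eq_mul]
    exact mul_nonneg hc (hM.dotProduct_mulVec_nonneg x)

lemma conj_psd {n : ℕ} (v : Fin n → ℝ) (P : Matrix (Fin n) (Fin n) ℝ) :
    (Pᵀ * vecMulVec v v * P).PosSemidef := by
  have h : P = (Pᵀ)ᴴ := Matrix.ext fun i j => (star_trivial _).symm
  rw [h]
  exact (vv_psd v).mul_mul_conjTranspose_same Pᵀ

lemma cone_sub {n : ℕ} {K : Set (Matrix (Fin n) (Fin n) ℝ)}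
    (hK : ∀ M ∈ K, M.PosSemidef) : coneHull K ⊆ PSDcone n := by
  rintro X ⟨k, c, M, hc, hM, rfl⟩
  rw [mem_psd_iff]
  exact Finset.sum_induction _ _ (fun a b ha hb => ha.add hb) (Matrix.PosSemidef.zero)
    (fun i _ => psd_smul (hc i) (hK _ (hM i)))

lemma quad_eq {n : ℕ} (i : Fin n) :
    vecMulVec (e i + e i) (e i + e i) = (4 : ℝ) • vecMulVec (e i) (e i) := by
  ext a b
  simp only [vecMulVec_apply, Matrix.smul_apply, Pi.add_apply, smul_eq_mul]
  ring

lemma psd_sub_cone {n : ℕ} (S : Set (Matrix (Fin n) (Fin n) ℝ))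
    (hS : ∀ (P : Matrix (Fin n) (Fin n) ℝ) (i : Fin n), Pᵀ * P = 1 →
      Pᵀ * vecMulVec (e i + e i) (e i + e i) * P ∈ S) :
    PSDcone n ⊆ coneHull S := by
  intro X hX
  have hPSD : X.PosSemidef := mem_psd_iff.mp hX
  have hH : X.IsHermitian := hPSD.1
  set U : Matrix (Fin n) (Fin n) ℝ := (hH.eigenvectorUnitary : Matrix (Fin n) (Fin n) ℝ) with hU
  have hspec : X = U * Matrix.diagonal hH.eigenvalues * star U := by
    have := hH.spectral_theorem
    rw [Unitary.conjStarAlgAut_apply] at this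
    convert this using 3 <;> rfl
  have hstar : star U = Uᵀ := Matrix.ext fun i j => star_trivial _
  have hUU : U * star U = 1 := (Matrix.mem_unitaryGroup_iff).mp hH.eigenvectorUnitary.2
  set P : Matrix (Fin n) (Fin n) ℝ := Uᵀ with hPdef
  have hPt : Pᵀ = U := Matrix.transpose_transpose U
  have hP : Pᵀ * P = 1 := by rw [hPt, ← hstar, hUU]
  refine ⟨n, fun i => hH.eigenvalues i / 4,
    fun i => Pᵀ * vecMulVec (e i + e i) (e i + e i) * P, ?_, ?_, ?_⟩
  · intro i
    have := hPSD.eigenvalues_nonneg i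
    positivity
  · intro i
    exact hS P i hP
  · show X = ∑ i : Fin n, (hH.eigenvalues i / 4) • (Pᵀ * vecMulVec (e i + e i) (e i + e i) * P)
    refine hspec.trans ?_
    rw [hstar, diag_eq_sum, Matrix.mul_sum, Matrix.sum_mul]
    refine Finset.sum_congr rfl fun i _ => ?_
    rw [quad_eq, hPt]
    rw [Matrix.mul_smul, Matrix.smul_mul, Matrix.mul_smul, Matrix.smul_mul, smul_smul]
    norm_num

/-- `S^n_+` equals the conical hull of all orthogonal conjugates
of `B_+`, and also of all orthogonal conjugates of `B_-`. -/
theorem stmt8 (n : ℕ) (hn : 0 < n) :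
    PSDcone n =
      coneHull (⋃ P ∈ {P : Matrix (Fin n) (Fin n) ℝ | Pᵀ * P = 1},
        {M | ∃ X ∈ Bplus n, M = Pᵀ * X * P}) ∧
    PSDcone n =
      coneHull (⋃ P ∈ {P : Matrix (Fin n) (Fin n) ℝ | Pᵀ * P = 1},
        {M | ∃ X ∈ Bminus n, M = Pᵀ * X * P}) := by
  constructor
  · apply Set.Subset.antisymm
    · refine psd_sub_cone _ fun P i hP => ?_
      exact Set.mem_iUnion₂.mpr ⟨P, hP, ⟨_, ⟨i, i, le_refl i, rfl⟩, rfl⟩⟩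
    · apply cone_sub
      intro M hM
      obtain ⟨P, hP, Y, ⟨i, j, hij, rfl⟩, rfl⟩ := Set.mem_iUnion₂.mp hM
      exact conj_psd _ P
  · apply Set.Subset.antisymm
    · refine psd_sub_cone _ fun P i hP => ?_
      exact Set.mem_iUnion₂.mpr ⟨P, hP, ⟨_, Or.inl ⟨i, rfl⟩, rfl⟩⟩
    · apply cone_sub
      intro M hM
      obtain ⟨P, hP, Y, hY, rfl⟩ := Set.mem_iUnion₂.mp hM
      rcases hY with ⟨i, rfl⟩ | ⟨i, j, hij, rfl⟩ <;> exact conj_psd _ P
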